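/- arXiv:2602.00815 — 3 statements merged into one kernel-verified Lean document; each statement's English description precedes it below -/
import Mathlib

section
/- Let E be a complete real inner product space, let J : E → ℝ be differentiable with gradient ∇J, satisfying for some L > 0 the L-smoothness lower bound: for all θ, θ' ∈ E, J(θ') ≥ J(θ) + ⟨∇J(θ), θ' − θ⟩ − (L/2)·‖θ' − θ‖². Suppose moreover J satisfies the Polyak–Łojasiewicz condition with constant c > 0 relative to a value J⋆ ∈ ℝ: for all θ ∈ E, ‖∇J(θ)‖² ≥ c·(J⋆ − J(θ)). Fix θ ∈ E and α > 0 with α·(1 − Lα/2) ≥ 0. Let (Ω, μ) be a probability space and g : Ω → E Bochner-integrable with ∫ g dμ = ∇J(θ), with ω ↦ ‖g(ω)‖² integrable, ∫ ‖g(ω) − ∇J(θ)‖² dμ ≤ δ² for some δ ≥ 0, and ω ↦ J(θ + α·g(ω)) integrable. Then J⋆ − ∫ J(θ + α·g(ω)) dμ(ω) ≤ (1 − α·c·(1 − Lα/2))·(J⋆ − J(θ)) + (L·α²·δ²)/2. -/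
open MeasureTheory RealInnerProductSpace

/-- One-step contraction of the optimality gap under the Polyak–Łojasiewicz
condition: `J⋆ - E[J(θ + α g)] ≤ (1 - αc(1 - Lα/2))(J⋆ - J(θ)) + Lα²δ²/2`. -/
theorem stmt_1
    {E : Type*} [NormedAddCommGroup E] [InnerProductSpace ℝ E] [CompleteSpace E]
    (J : E → ℝ) (gradJ : E → E)
    (hgrad : ∀ θ, HasGradientAt J (gradJ θ) θ)
    (L : ℝ) (hL : 0 < L)
    (hsmooth : ∀ θ θ' : E,
      J θ' ≥ J θ + ⟪gradJ θ, θ' - θ⟫ - L / 2 * ‖θ' - θ‖ ^ 2)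
    (c : ℝ) (hc : 0 < c) (Jstar : ℝ)
    (hPL : ∀ θ : E, ‖gradJ θ‖ ^ 2 ≥ c * (Jstar - J θ))
    (θ : E) (α : ℝ) (hα : 0 < α) (hstep : α * (1 - L * α / 2) ≥ 0)
    {Ω : Type*} [MeasurableSpace Ω] (μ : Measure Ω) [IsProbabilityMeasure μ]
    (g : Ω → E) (hg_int : Integrable g μ)
    (hg_mean : ∫ ω, g ω ∂μ = gradJ θ)
    (hg_sq_int : Integrable (fun ω => ‖g ω‖ ^ 2) μ)
    (δ : ℝ) (hδ : 0 ≤ δ)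
    (hg_var : ∫ ω, ‖g ω - gradJ θ‖ ^ 2 ∂μ ≤ δ ^ 2)
    (hJ_int : Integrable (fun ω => J (θ + α • g ω)) μ) :
    Jstar - ∫ ω, J (θ + α • g ω) ∂μ ≤
      (1 - α * c * (1 - L * α / 2)) * (Jstar - J θ) + L * α ^ 2 * δ ^ 2 / 2 := by
  set v := gradJ θ with hv
  have hinner_int : Integrable (fun ω => ⟪v, g ω⟫) μ := hg_int.const_inner v
  have hinner_val : ∫ ω, ⟪v, g ω⟫ ∂μ = ‖v‖ ^ 2 := by
    rw [integral_inner hg_int, hg_mean, real_inner_self_eq_norm_sq]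
  have hA : Integrable (fun ω => 2 * ⟪v, g ω⟫) μ := hinner_int.const_mul 2
  have hB : Integrable (fun ω => ‖g ω‖ ^ 2 - 2 * ⟪v, g ω⟫) μ := hg_sq_int.sub hA
  have e1 : ∫ ω, (‖g ω‖ ^ 2 - 2 * ⟪v, g ω⟫) ∂μ = (∫ ω, ‖g ω‖ ^ 2 ∂μ) - 2 * ‖v‖ ^ 2 := by
    rw [integral_sub hg_sq_int hA, integral_const_mul, hinner_val]
  have hvar_id : ∫ ω, ‖g ω - v‖ ^ 2 ∂μ = (∫ ω, ‖g ω‖ ^ 2 ∂μ) - ‖v‖ ^ 2 := by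
    have hpt : ∀ ω, ‖g ω - v‖ ^ 2 = ‖g ω‖ ^ 2 - 2 * ⟪v, g ω⟫ + ‖v‖ ^ 2 := by
      intro ω
      rw [norm_sub_sq_real, real_inner_comm]
    simp_rw [hpt]
    rw [integral_add hB (integrable_const _), e1, integral_const]
    simp
    ring
  have hS : ∫ ω, ‖g ω‖ ^ 2 ∂μ ≤ δ ^ 2 + ‖v‖ ^ 2 := by
    have := hg_var
    rw [hvar_id] at this
    linarith
  have key : ∀ ω, J θ + α * ⟪v, g ω⟫ - L * α ^ 2 / 2 * ‖g ω‖ ^ 2 ≤ J (θ + α • g ω) := by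
    intro ω
    have h := hsmooth θ (θ + α • g ω)
    simp only [add_sub_cancel_left] at h
    rw [real_inner_smul_right, norm_smul, mul_pow] at h
    have h2 : |α| ^ 2 = α ^ 2 := sq_abs α
    rw [Real.norm_eq_abs, h2] at h
    nlinarith [h]
  have hC : Integrable (fun ω => J θ + α * ⟪v, g ω⟫) μ :=
    (integrable_const (J θ)).add (hinner_int.const_mul α)
  have hlhs_int : Integrable (fun ω => J θ + α * ⟪v, g ω⟫ - L * α ^ 2 / 2 * ‖g ω‖ ^ 2) μ :=
    hC.sub (hg_sq_int.const_mul _)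
  have hmono := integral_mono hlhs_int hJ_int key
  have eC : ∫ ω, (J θ + α * ⟪v, g ω⟫) ∂μ = J θ + α * ‖v‖ ^ 2 := by
    rw [integral_add (integrable_const (J θ)) (hinner_int.const_mul α),
      integral_const_mul, hinner_val, integral_const]
    simp
  have hlhs_val : ∫ ω, (J θ + α * ⟪v, g ω⟫ - L * α ^ 2 / 2 * ‖g ω‖ ^ 2) ∂μ
      = J θ + α * ‖v‖ ^ 2 - L * α ^ 2 / 2 * ∫ ω, ‖g ω‖ ^ 2 ∂μ := by
    rw [integral_sub hC (hg_sq_int.const_mul _), eC, integral_const_mul]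
  rw [hlhs_val] at hmono
  have hPLθ : c * (Jstar - J θ) ≤ ‖v‖ ^ 2 := hPL θ
  have hLa : (0:ℝ) ≤ L * α ^ 2 / 2 := by positivity
  have h1 := mul_le_mul_of_nonneg_left hPLθ hstep
  have h2 := mul_le_mul_of_nonneg_left hS hLa
  nlinarith [h1, h2, hmono]
end

section
/- Let E be a complete real inner product space, let J : E → ℝ be differentiable with gradient ∇J, satisfying for some L > 0 the L-smoothness lower bound: for all θ, θ' ∈ E, J(θ') ≥ J(θ) + ⟨∇J(θ), θ' − θ⟩ − (L/2)·‖θ' − θ‖², and the Polyak–Łojasiewicz condition with constant c > 0 relative to J⋆ ∈ ℝ: ‖∇J(θ)‖² ≥ c·(J⋆ − J(θ)) for all θ. Fix a step size α > 0 with L·α ≤ 1, set η := α·c/2, and assume η ≤ 1 and the noise condition L·α²·δ² ≤ η·ε' for some δ ≥ 0 and ε' > 0. Fix θ ∈ E with J⋆ − J(θ) ≥ 0. Let (Ω, μ) be a probability space and g : Ω → E Bochner-integrable with ∫ g dμ = ∇J(θ), with ω ↦ ‖g(ω)‖² integrable, ∫ ‖g(ω) − ∇J(θ)‖² dμ ≤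 δ², and ω ↦ J(θ + α·g(ω)) integrable. Then J⋆ − ∫ J(θ + α·g(ω)) dμ(ω) ≤ (1 − η)·(J⋆ − J(θ)) + η·ε'/2. -/
open MeasureTheory RealInnerProductSpace

/-- One-step recursive inequality `E[Δ_{t+1}] ≤ (1 - η) Δ_t + η ε'/2` with
`η = αc/2`, under `Lα ≤ 1` and the noise condition `Lα²δ² ≤ η ε'`. -/
theorem stmt_2
    {E : Type*} [NormedAddCommGroup E] [InnerProductSpace ℝ E] [CompleteSpace E]
    (J : E → ℝ) (gradJ : E → E)
    (hgrad : ∀ θ, HasGradientAt J (gradJ θ) θ)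
    (L : ℝ) (hL : 0 < L)
    (hsmooth : ∀ θ θ' : E,
      J θ' ≥ J θ + ⟪gradJ θ, θ' - θ⟫ - L / 2 * ‖θ' - θ‖ ^ 2)
    (c : ℝ) (hc : 0 < c) (Jstar : ℝ)
    (hPL : ∀ θ : E, ‖gradJ θ‖ ^ 2 ≥ c * (Jstar - J θ))
    (α : ℝ) (hα : 0 < α) (hLα : L * α ≤ 1)
    (η : ℝ) (hη : η = α * c / 2) (hη1 : η ≤ 1)
    (δ ε' : ℝ) (hδ : 0 ≤ δ) (hε' : 0 < ε')
    (hnoise : L * α ^ 2 * δ ^ 2 ≤ η * ε')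
    (θ : E) (hgap : Jstar - J θ ≥ 0)
    {Ω : Type*} [MeasurableSpace Ω] (μ : Measure Ω) [IsProbabilityMeasure μ]
    (g : Ω → E) (hg_int : Integrable g μ)
    (hg_mean : ∫ ω, g ω ∂μ = gradJ θ)
    (hg_sq_int : Integrable (fun ω => ‖g ω‖ ^ 2) μ)
    (hg_var : ∫ ω, ‖g ω - gradJ θ‖ ^ 2 ∂μ ≤ δ ^ 2)
    (hJ_int : Integrable (fun ω => J (θ + α • g ω)) μ) :
    Jstar - ∫ ω, J (θ + α • g ω) ∂μ ≤
      (1 - η) * (Jstar - J θ) + η * ε' / 2 := by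
  set m := gradJ θ with hm
  have hinner_int : Integrable (fun ω => ⟪m, g ω⟫) μ := hg_int.const_inner m
  have hinner : ∫ ω, ⟪m, g ω⟫ ∂μ = ‖m‖ ^ 2 := by
    rw [integral_inner hg_int, hg_mean, real_inner_self_eq_norm_sq]
  -- variance expansion
  have hvar : ∫ ω, ‖g ω - m‖ ^ 2 ∂μ = (∫ ω, ‖g ω‖ ^ 2 ∂μ) - ‖m‖ ^ 2 := by
    have hpt : ∀ ω, ‖g ω - m‖ ^ 2 = ‖g ω‖ ^ 2 - 2 * ⟪m, g ω⟫ + ‖m‖ ^ 2 := by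
      intro ω
      rw [@norm_sub_sq_real, real_inner_comm]
    have h1 : Integrable (fun ω => ‖g ω‖ ^ 2 - 2 * ⟪m, g ω⟫) μ :=
      hg_sq_int.sub (hinner_int.const_mul 2)
    calc ∫ ω, ‖g ω - m‖ ^ 2 ∂μ
        = ∫ ω, (‖g ω‖ ^ 2 - 2 * ⟪m, g ω⟫ + ‖m‖ ^ 2) ∂μ := by
          exact integral_congr_ae (Filter.Eventually.of_forall hpt)
      _ = (∫ ω, ‖g ω‖ ^ 2 ∂μ) - 2 * ‖m‖ ^ 2 + ‖m‖ ^ 2 := by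
          rw [integral_add h1 (integrable_const _),
            integral_sub hg_sq_int (hinner_int.const_mul 2),
            integral_const_mul, hinner, integral_const]
          simp
      _ = (∫ ω, ‖g ω‖ ^ 2 ∂μ) - ‖m‖ ^ 2 := by ring
  have hS : ∫ ω, ‖g ω‖ ^ 2 ∂μ ≤ δ ^ 2 + ‖m‖ ^ 2 := by linarith [hg_var, hvar.symm.le]
  -- pointwise smoothness lower bound
  have hlow : ∀ ω, J θ + α * ⟪m, g ω⟫ - L * α ^ 2 / 2 * ‖g ω‖ ^ 2 ≤ J (θ + α • g ω) := by
    intro ω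
    have h := hsmooth θ (θ + α • g ω)
    simp only [add_sub_cancel_left] at h
    rw [real_inner_smul_right, norm_smul, Real.norm_eq_abs, abs_of_pos hα, mul_pow] at h
    nlinarith [h]
  have hkey : J θ + α * ‖m‖ ^ 2 - L * α ^ 2 / 2 * ∫ ω, ‖g ω‖ ^ 2 ∂μ ≤
      ∫ ω, J (θ + α • g ω) ∂μ := by
    have h2 : Integrable (fun ω => J θ + α * ⟪m, g ω⟫) μ :=
      (integrable_const _).add (hinner_int.const_mul α)
    have hint : Integrable (fun ω => J θ + α * ⟪m, g ω⟫ - L * α ^ 2 / 2 * ‖g ω‖ ^ 2) μ :=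
      h2.sub (hg_sq_int.const_mul _)
    have := integral_mono hint hJ_int hlow
    rwa [integral_sub h2 (hg_sq_int.const_mul _),
      integral_add (integrable_const _) (hinner_int.const_mul α),
      integral_const_mul, integral_const_mul, hinner, integral_const, probReal_univ,
      smul_eq_mul, one_mul] at this
  have hPLθ := hPL θ
  have hGnn : (0:ℝ) ≤ ‖m‖ ^ 2 := sq_nonneg _
  nlinarith [mul_nonneg hα.le (sub_nonneg.2 hLα), sq_nonneg δ,
    mul_le_mul_of_nonneg_left hS (by positivity : (0:ℝ) ≤ L * α ^ 2 / 2),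
    mul_le_mul_of_nonneg_left hPLθ (by positivity : (0:ℝ) ≤ α / 2),
    mul_nonneg (mul_nonneg hα.le (sub_nonneg.2 hLα)) hGnn]
end

section
/- Let E be a complete real inner product space, let J : E → ℝ be differentiable with gradient ∇J, satisfying for some L > 0 the L-smoothness lower bound: for all θ, θ' ∈ E, J(θ') ≥ J(θ) + ⟨∇J(θ), θ' − θ⟩ − (L/2)·‖θ' − θ‖², and the Polyak–Łojasiewicz condition with constant c > 0 relative to J⋆ ∈ ℝ: ‖∇J(θ)‖² ≥ c·(J⋆ − J(θ)) for all θ, with additionally J(θ) ≤ J⋆ for all θ ∈ E. Let (Ω, F, μ) be a probability space with a filtration (F_t)_{t ∈ ℕ}, and let α > 0 satisfy L·α ≤ 1; set η := α·c/2 and assume 0 < η < 1. Let (θ_t)_{t ∈ ℕ} and (g_t)_{t ∈ ℕ} be sequences of random vectors Ω → E such that: θ_0 is a.e. equal to a constant θ₀ ∈ E with J⋆ − J(θ₀) = ε > 0; θ_{t+1} = θ_t + α·g_t a.e. for each t; each θ_t is F_t-measurable and each g_t is F_{t+1}-measurable; for each t, g_t is Bochner-integrable with conditional expectation E[g_t |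 F_t] = ∇J(θ_t) a.e.; for each t, ω ↦ ‖g_t(ω)‖² is integrable and E[‖g_t − ∇J(θ_t)‖² | F_t] ≤ δ² a.e. for some δ ≥ 0 with L·α²·δ² ≤ η·ε'; and for each t, ω ↦ J(θ_t(ω)) is integrable. Then for every ε' > 0 and every natural number N with N ≥ Real.log(2·ε/ε') / (−Real.log(1 − η)), the expected optimality gap satisfies ∫ (J⋆ − J(θ_N(ω))) dμ(ω) ≤ ε'. -/
open MeasureTheory RealInnerProductSpace


lemma condExpL2_ae_eq_condexp' {Ω : Type*} {m m0 : MeasurableSpace Ω} (hm : m ≤ m0)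
    {μ : Measure Ω} [IsFiniteMeasure μ]
    {E : Type*} [NormedAddCommGroup E] [InnerProductSpace ℝ E] [CompleteSpace E]
    {g : Ω → E} (hg2 : MemLp g 2 μ) :
    (condExpL2 E ℝ hm (hg2.toLp g) : Ω → E) =ᵐ[μ] μ[g|m] := by
  refine ae_eq_condExp_of_forall_setIntegral_eq hm (hg2.integrable one_le_two)
    (fun s _ _ => (integrable_condExpL2_of_isFiniteMeasure hm).integrableOn)
    (fun s hs hμs => ?_) (aestronglyMeasurable_condExpL2 hm _)
  rw [integral_condExpL2_eq hm (hg2.toLp g) hs hμs.ne]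
  exact setIntegral_congr_ae (hm s hs) ((hg2.coeFn_toLp).mono fun x hx _ => hx)

lemma integral_inner_condexp {Ω : Type*} {m m0 : MeasurableSpace Ω} (hm : m ≤ m0)
    {μ : Measure Ω} [IsFiniteMeasure μ]
    {E : Type*} [NormedAddCommGroup E] [InnerProductSpace ℝ E] [CompleteSpace E]
    {X g : Ω → E} (hX2 : MemLp X 2 μ) (hg2 : MemLp g 2 μ)
    (hXm : AEStronglyMeasurable[m] X μ) :
    ∫ ω, ⟪X ω, g ω⟫ ∂μ = ∫ ω, ⟪X ω, (μ[g|m]) ω⟫ ∂μ := by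
  have hXl : AEStronglyMeasurable[m] (hX2.toLp X : Ω → E) μ :=
    hXm.congr hX2.coeFn_toLp.symm
  have key := inner_condExpL2_eq_inner_fun (E := E) (𝕜 := ℝ) hm (hg2.toLp g) (hX2.toLp X) hXl
  rw [L2.inner_def, L2.inner_def] at key
  have h1 : ∫ ω, ⟪X ω, g ω⟫ ∂μ = ∫ ω, ⟪(hg2.toLp g : Ω → E) ω, (hX2.toLp X : Ω → E) ω⟫ ∂μ := by
    refine integral_congr_ae ?_
    filter_upwards [hg2.coeFn_toLp, hX2.coeFn_toLp] with ω h1 h2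
    rw [h1, h2, real_inner_comm]
  have h2 : ∫ ω, ⟪X ω, (μ[g|m]) ω ⟫ ∂μ
      = ∫ ω, ⟪(condExpL2 E ℝ hm (hg2.toLp g) : Ω → E) ω, (hX2.toLp X : Ω → E) ω⟫ ∂μ := by
    refine integral_congr_ae ?_
    filter_upwards [condExpL2_ae_eq_condexp' hm hg2, hX2.coeFn_toLp] with ω h1 h2
    rw [h1, h2, real_inner_comm]
  rw [h1, h2, key]

set_option maxHeartbeats 1000000 in
/-- Theorem 1 of the paper: one-sample-per-step stochastic gradient ascent with
unbiased, conditionally variance-bounded gradient estimates, on an `L`-smooth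
objective satisfying the Polyak–Łojasiewicz condition, reduces the expected
optimality gap `J⋆ - E[J(θ_N)]` below `ε'` after `N ≥ log(2ε/ε')/(-log(1-η))`
steps, where `η = αc/2` and `ε` is the initial gap. -/
theorem stmt_6
    {E : Type*} [NormedAddCommGroup E] [InnerProductSpace ℝ E] [CompleteSpace E]
    (J : E → ℝ) (gradJ : E → E)
    (hgrad : ∀ θ, HasGradientAt J (gradJ θ) θ)
    (L : ℝ) (hL : 0 < L)
    (hsmooth : ∀ θ θ' : E,
      J θ' ≥ J θ + ⟪gradJ θ, θ' - θ⟫ - L / 2 * ‖θ' - θ‖ ^ 2)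
    (c : ℝ) (hc : 0 < c) (Jstar : ℝ)
    (hPL : ∀ θ : E, ‖gradJ θ‖ ^ 2 ≥ c * (Jstar - J θ))
    (hbound : ∀ θ : E, J θ ≤ Jstar)
    {Ω : Type*} {m : MeasurableSpace Ω} (μ : Measure Ω) [IsProbabilityMeasure μ]
    (ℱ : Filtration ℕ m)
    (α : ℝ) (hα : 0 < α) (hLα : L * α ≤ 1)
    (η : ℝ) (hη : η = α * c / 2) (hη0 : 0 < η) (hη1 : η < 1)
    (θseq gseq : ℕ → Ω → E)
    (θ₀ : E) (ε : ℝ) (hθ0 : θseq 0 =ᵐ[μ] fun _ => θ₀)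
    (hgap : Jstar - J θ₀ = ε) (hε : 0 < ε)
    (hupd : ∀ t : ℕ, θseq (t + 1) =ᵐ[μ] fun ω => θseq t ω + α • gseq t ω)
    (hθ_meas : ∀ t : ℕ, StronglyMeasurable[ℱ t] (θseq t))
    (hg_meas : ∀ t : ℕ, StronglyMeasurable[ℱ (t + 1)] (gseq t))
    (hg_int : ∀ t : ℕ, Integrable (gseq t) μ)
    (hg_unbiased : ∀ t : ℕ, μ[gseq t | ℱ t] =ᵐ[μ] fun ω => gradJ (θseq t ω))
    (hg_sq_int : ∀ t : ℕ, Integrable (fun ω => ‖gseq t ω‖ ^ 2) μ)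
    (δ : ℝ) (hδ : 0 ≤ δ)
    (hg_var : ∀ t : ℕ,
      μ[fun ω => ‖gseq t ω - gradJ (θseq t ω)‖ ^ 2 | ℱ t] ≤ᵐ[μ] fun _ => δ ^ 2)
    (ε' : ℝ) (hε' : 0 < ε')
    (hnoise : L * α ^ 2 * δ ^ 2 ≤ η * ε')
    (hJ_int : ∀ t : ℕ, Integrable (fun ω => J (θseq t ω)) μ) :
    ∀ N : ℕ, (N : ℝ) ≥ Real.log (2 * ε / ε') / (-Real.log (1 - η)) →
      ∫ ω, (Jstar - J (θseq N ω)) ∂μ ≤ ε' := by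
  intro N hN
  -- gradient norm upper bound from smoothness and boundedness
  have hub : ∀ θ : E, ‖gradJ θ‖ ^ 2 ≤ 2 * L * (Jstar - J θ) := by
    intro θ
    have h := hsmooth θ (θ + L⁻¹ • gradJ θ)
    have h2 := hbound (θ + L⁻¹ • gradJ θ)
    rw [add_sub_cancel_left, real_inner_smul_right, real_inner_self_eq_norm_sq, norm_smul,
      Real.norm_eq_abs, abs_of_pos (inv_pos.mpr hL), mul_pow] at h
    have e1 : L⁻¹ * ‖gradJ θ‖ ^ 2 - L / 2 * (L⁻¹ ^ 2 * ‖gradJ θ‖ ^ 2)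
        = ‖gradJ θ‖ ^ 2 / (2 * L) := by
      field_simp
      ring
    have h3 : ‖gradJ θ‖ ^ 2 / (2 * L) ≤ Jstar - J θ := by linarith [h, h2, e1]
    rw [div_le_iff₀ (by positivity : (0:ℝ) < 2 * L)] at h3
    nlinarith [h3]
  have hgradm : ∀ t, AEStronglyMeasurable (fun ω => gradJ (θseq t ω)) μ := fun t =>
    (stronglyMeasurable_condExp.mono (ℱ.le t)).aestronglyMeasurable.congr (hg_unbiased t)
  have hgrad_sq_int : ∀ t, Integrable (fun ω => ‖gradJ (θseq t ω)‖ ^ 2) μ := by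
    intro t
    refine Integrable.mono' (((integrable_const Jstar).sub (hJ_int t)).const_mul (2 * L))
      ((hgradm t).norm.pow 2) ?_
    filter_upwards with ω
    rw [Real.norm_of_nonneg (by positivity)]
    exact hub _
  have hinner_int : ∀ t, Integrable (fun ω => ⟪gradJ (θseq t ω), gseq t ω⟫) μ := by
    intro t
    refine Integrable.mono' ((hgrad_sq_int t).add (hg_sq_int t))
      ((hgradm t).inner (hg_int t).1) ?_
    filter_upwards with ω
    simp only [Pi.add_apply]
    rw [Real.norm_eq_abs]
    have h1 := abs_real_inner_le_norm (gradJ (θseq t ω)) (gseq t ω)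
    nlinarith [sq_nonneg (‖gradJ (θseq t ω)‖ - ‖gseq t ω‖), norm_nonneg (gradJ (θseq t ω)),
      norm_nonneg (gseq t ω)]
  have hgrad_mem : ∀ t, MemLp (fun ω => gradJ (θseq t ω)) 2 μ := fun t =>
    (memLp_two_iff_integrable_sq_norm (hgradm t)).mpr (hgrad_sq_int t)
  have hg_mem : ∀ t, MemLp (gseq t) 2 μ := fun t =>
    (memLp_two_iff_integrable_sq_norm (hg_int t).1).mpr (hg_sq_int t)
  have hgradm' : ∀ t, AEStronglyMeasurable[ℱ t] (fun ω => gradJ (θseq t ω)) μ := fun t =>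
    AEStronglyMeasurable.congr stronglyMeasurable_condExp.aestronglyMeasurable
      (hg_unbiased t)
  have hinner_eq : ∀ t, ∫ ω, ⟪gradJ (θseq t ω), gseq t ω⟫ ∂μ
      = ∫ ω, ‖gradJ (θseq t ω)‖ ^ 2 ∂μ := by
    intro t
    rw [integral_inner_condexp (ℱ.le t) (hgrad_mem t) (hg_mem t) (hgradm' t)]
    refine integral_congr_ae ?_
    filter_upwards [hg_unbiased t] with ω hω
    rw [hω, real_inner_self_eq_norm_sq]
  have hvar_int : ∀ t, Integrable (fun ω => ‖gseq t ω - gradJ (θseq t ω)‖ ^ 2) μ := by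
    intro t
    have heq : (fun ω => ‖gseq t ω - gradJ (θseq t ω)‖ ^ 2)
        = fun ω => ‖gseq t ω‖ ^ 2 - 2 * ⟪gradJ (θseq t ω), gseq t ω⟫
          + ‖gradJ (θseq t ω)‖ ^ 2 := by
      funext ω
      rw [norm_sub_sq_real, real_inner_comm]
    rw [heq]
    exact ((hg_sq_int t).sub ((hinner_int t).const_mul 2)).add (hgrad_sq_int t)
  have hvar_le : ∀ t, ∫ ω, ‖gseq t ω - gradJ (θseq t ω)‖ ^ 2 ∂μ ≤ δ ^ 2 := by
    intro t
    rw [← integral_condExp (ℱ.le t)]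
    calc ∫ ω, (μ[fun ω => ‖gseq t ω - gradJ (θseq t ω)‖ ^ 2|ℱ t]) ω ∂μ
        ≤ ∫ _, (δ ^ 2 : ℝ) ∂μ :=
          integral_mono_ae integrable_condExp (integrable_const _) (hg_var t)
      _ = δ ^ 2 := by simp
  have hG2 : ∀ t, ∫ ω, ‖gseq t ω‖ ^ 2 ∂μ
      = ∫ ω, ‖gseq t ω - gradJ (θseq t ω)‖ ^ 2 ∂μ + ∫ ω, ‖gradJ (θseq t ω)‖ ^ 2 ∂μ := by
    intro t
    have hexp : ∫ ω, ‖gseq t ω - gradJ (θseq t ω)‖ ^ 2 ∂μ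
        = ∫ ω, ‖gseq t ω‖ ^ 2 ∂μ - 2 * ∫ ω, ⟪gradJ (θseq t ω), gseq t ω⟫ ∂μ
          + ∫ ω, ‖gradJ (θseq t ω)‖ ^ 2 ∂μ := by
      calc ∫ ω, ‖gseq t ω - gradJ (θseq t ω)‖ ^ 2 ∂μ
          = ∫ ω, (‖gseq t ω‖ ^ 2 - 2 * ⟪gradJ (θseq t ω), gseq t ω⟫
              + ‖gradJ (θseq t ω)‖ ^ 2) ∂μ := by
            refine integral_congr_ae (Filter.Eventually.of_forall fun ω => ?_)
            beta_reduce
            rw [norm_sub_sq_real, real_inner_comm]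
        _ = ∫ ω, (‖gseq t ω‖ ^ 2 - 2 * ⟪gradJ (θseq t ω), gseq t ω⟫) ∂μ
              + ∫ ω, ‖gradJ (θseq t ω)‖ ^ 2 ∂μ :=
            integral_add ((hg_sq_int t).sub ((hinner_int t).const_mul 2)) (hgrad_sq_int t)
        _ = ∫ ω, ‖gseq t ω‖ ^ 2 ∂μ - ∫ ω, 2 * ⟪gradJ (θseq t ω), gseq t ω⟫ ∂μ
              + ∫ ω, ‖gradJ (θseq t ω)‖ ^ 2 ∂μ := by
            rw [integral_sub (hg_sq_int t) ((hinner_int t).const_mul 2)]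
        _ = ∫ ω, ‖gseq t ω‖ ^ 2 ∂μ - 2 * ∫ ω, ⟪gradJ (θseq t ω), gseq t ω⟫ ∂μ
              + ∫ ω, ‖gradJ (θseq t ω)‖ ^ 2 ∂μ := by
            rw [integral_const_mul]
    rw [hexp, hinner_eq t]
    ring
  set Δ : ℕ → ℝ := fun t => ∫ ω, (Jstar - J (θseq t ω)) ∂μ with hΔdef
  have hΔt : ∀ s, Δ s = Jstar - ∫ ω, J (θseq s ω) ∂μ := by
    intro s
    simp only [hΔdef]
    rw [integral_sub (integrable_const _) (hJ_int s), integral_const]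
    simp
  have hΔpos : ∀ s, 0 ≤ Δ s := fun s =>
    integral_nonneg fun ω => sub_nonneg.mpr (hbound _)
  have hΔ0 : Δ 0 = ε := by
    simp only [hΔdef]
    have heq : ∫ ω, (Jstar - J (θseq 0 ω)) ∂μ = ∫ _, (Jstar - J θ₀) ∂μ :=
      integral_congr_ae (hθ0.mono fun ω h => by simp [h])
    rw [heq, integral_const]
    simp [hgap]
  have hstep : ∀ t, Δ (t + 1) ≤ (1 - η) * Δ t + η * ε' / 2 := by
    intro t
    have hpt : ∀ᵐ ω ∂μ, J (θseq t ω) + α * ⟪gradJ (θseq t ω), gseq t ω⟫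
        - L / 2 * α ^ 2 * ‖gseq t ω‖ ^ 2 ≤ J (θseq (t + 1) ω) := by
      filter_upwards [hupd t] with ω hω
      have h := hsmooth (θseq t ω) (θseq t ω + α • gseq t ω)
      rw [add_sub_cancel_left, real_inner_smul_right, norm_smul, Real.norm_eq_abs,
        mul_pow, sq_abs] at h
      rw [hω]
      nlinarith [h]
    have hint : ∫ ω, (J (θseq t ω) + α * ⟪gradJ (θseq t ω), gseq t ω⟫
        - L / 2 * α ^ 2 * ‖gseq t ω‖ ^ 2) ∂μ ≤ ∫ ω, J (θseq (t + 1) ω) ∂μ :=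
      integral_mono_ae (((hJ_int t).add ((hinner_int t).const_mul α)).sub
        ((hg_sq_int t).const_mul (L / 2 * α ^ 2))) (hJ_int (t + 1)) hpt
    have hsplit : ∫ ω, (J (θseq t ω) + α * ⟪gradJ (θseq t ω), gseq t ω⟫
        - L / 2 * α ^ 2 * ‖gseq t ω‖ ^ 2) ∂μ
        = ∫ ω, J (θseq t ω) ∂μ + α * ∫ ω, ⟪gradJ (θseq t ω), gseq t ω⟫ ∂μ
          - L / 2 * α ^ 2 * ∫ ω, ‖gseq t ω‖ ^ 2 ∂μ := by
      calc ∫ ω, (J (θseq t ω) + α * ⟪gradJ (θseq t ω), gseq t ω⟫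
              - L / 2 * α ^ 2 * ‖gseq t ω‖ ^ 2) ∂μ
          = ∫ ω, (J (θseq t ω) + α * ⟪gradJ (θseq t ω), gseq t ω⟫) ∂μ
              - ∫ ω, L / 2 * α ^ 2 * ‖gseq t ω‖ ^ 2 ∂μ :=
            integral_sub ((hJ_int t).add ((hinner_int t).const_mul α))
              ((hg_sq_int t).const_mul (L / 2 * α ^ 2))
        _ = ∫ ω, J (θseq t ω) ∂μ + ∫ ω, α * ⟪gradJ (θseq t ω), gseq t ω⟫ ∂μ
              - ∫ ω, L / 2 * α ^ 2 * ‖gseq t ω‖ ^ 2 ∂μ := by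
            rw [integral_add (hJ_int t) ((hinner_int t).const_mul α)]
        _ = ∫ ω, J (θseq t ω) ∂μ + α * ∫ ω, ⟪gradJ (θseq t ω), gseq t ω⟫ ∂μ
              - L / 2 * α ^ 2 * ∫ ω, ‖gseq t ω‖ ^ 2 ∂μ := by
            rw [integral_const_mul, integral_const_mul]
    rw [hsplit, hinner_eq t, hG2 t] at hint
    have hA : c * Δ t ≤ ∫ ω, ‖gradJ (θseq t ω)‖ ^ 2 ∂μ := by
      simp only [hΔdef]
      rw [← integral_const_mul]
      exact integral_mono (((integrable_const Jstar).sub (hJ_int t)).const_mul c)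
        (hgrad_sq_int t) fun ω => hPL _
    have hAnn : 0 ≤ ∫ ω, ‖gradJ (θseq t ω)‖ ^ 2 ∂μ :=
      integral_nonneg fun ω => by positivity
    have hBnn : 0 ≤ ∫ ω, ‖gseq t ω - gradJ (θseq t ω)‖ ^ 2 ∂μ :=
      integral_nonneg fun ω => by positivity
    have hgap_t := hΔpos t
    rw [hΔt (t + 1), hΔt t]
    rw [hΔt t] at hA hgap_t
    set A := ∫ ω, ‖gradJ (θseq t ω)‖ ^ 2 ∂μ
    set B := ∫ ω, ‖gseq t ω - gradJ (θseq t ω)‖ ^ 2 ∂μ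
    have hB := hvar_le t
    subst hη
    nlinarith [mul_nonneg (mul_nonneg hα.le (sub_nonneg.mpr hLα)) hAnn,
      mul_le_mul_of_nonneg_left hA hα.le,
      mul_le_mul_of_nonneg_left hB (by positivity : (0:ℝ) ≤ L / 2 * α ^ 2)]
  have h1η : (0 : ℝ) < 1 - η := by linarith
  have hind : ∀ n, Δ n - ε' / 2 ≤ (1 - η) ^ n * (ε - ε' / 2) := by
    intro n
    induction n with
    | zero => simp [hΔ0]
    | succ k ih =>
      have hs := hstep k
      calc Δ (k + 1) - ε' / 2 ≤ (1 - η) * (Δ k - ε' / 2) := by linarith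
        _ ≤ (1 - η) * ((1 - η) ^ k * (ε - ε' / 2)) := mul_le_mul_of_nonneg_left ih h1η.le
        _ = (1 - η) ^ (k + 1) * (ε - ε' / 2) := by ring
  have hlog : Real.log (1 - η) < 0 := Real.log_neg h1η (by linarith)
  have hkey : Real.log (2 * ε / ε') ≤ (N : ℝ) * (-Real.log (1 - η)) :=
    (div_le_iff₀ (by linarith : (0 : ℝ) < -Real.log (1 - η))).mp hN
  have hpow : (1 - η) ^ N ≤ ε' / (2 * ε) := by
    have hexp : (1 - η) ^ N = Real.exp ((N : ℝ) * Real.log (1 - η)) := by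
      rw [← Real.exp_log h1η, ← Real.exp_nat_mul, Real.exp_log h1η]
    rw [hexp]
    have hloginv : Real.log (ε' / (2 * ε)) = -Real.log (2 * ε / ε') := by
      rw [← Real.log_inv]
      congr 1
      field_simp
    have hle : (N : ℝ) * Real.log (1 - η) ≤ Real.log (ε' / (2 * ε)) := by
      rw [hloginv]; nlinarith
    calc Real.exp ((N : ℝ) * Real.log (1 - η)) ≤ Real.exp (Real.log (ε' / (2 * ε))) :=
        Real.exp_le_exp.mpr hle
      _ = ε' / (2 * ε) := Real.exp_log (by positivity)
  have hfin : (1 - η) ^ N * ε ≤ ε' / 2 := by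
    have h := mul_le_mul_of_nonneg_right hpow hε.le
    calc (1 - η) ^ N * ε ≤ ε' / (2 * ε) * ε := h
      _ = ε' / 2 := by
        rw [div_mul_eq_mul_div, mul_comm ε' ε, mul_comm 2 ε,
          mul_div_mul_left _ _ hε.ne']
  have hN2 := hind N
  have hmono : (1 - η) ^ N * (ε - ε' / 2) ≤ (1 - η) ^ N * ε := by
    have := pow_nonneg h1η.le N
    nlinarith
  show Δ N ≤ ε'
  linarith
end
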